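/- A compact Hausdorff topological abelian group in which every element has finite order has finite exponent: there exists n ≥ 1 with n·x = 0 for all x. -/

import Mathlib

theorem compact_torsion_abelian_group_bounded_exponent
    {G : Type*} [AddCommGroup G] [TopologicalSpace G] [IsTopologicalAddGroup G]
    [CompactSpace G] [T2Space G]
    (htor : ∀ x : G, ∃ n : ℕ, 0 < n ∧ n • x = 0) :
    ∃ n : ℕ, 0 < n ∧ ∀ x : G, n • x = 0 := by
  -- the closed sets {x | (n+1) • x = 0} cover G
  have hclosed : ∀ n : ℕ, IsClosed {x : G | (n + 1) • x = 0} := by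
    intro n
    exact isClosed_eq (continuous_id.nsmul (n + 1)) continuous_const
  have hcover : (⋃ n : ℕ, {x : G | (n + 1) • x = 0}) = Set.univ := by
    ext x
    simp only [Set.mem_iUnion, Set.mem_univ, iff_true, Set.mem_setOf_eq]
    obtain ⟨n, hn, hx⟩ := htor x
    exact ⟨n - 1, by rwa [Nat.sub_add_cancel hn]⟩
  -- Baire: some set has nonempty interior
  obtain ⟨n, x, hx⟩ := nonempty_interior_of_iUnion_of_closed hclosed
    hcover
  -- that set is a subgroup H, which is then open
  set m := n + 1 with hm
  let H : AddSubgroup G :=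
    { carrier := {x : G | m • x = 0}
      zero_mem' := by simp
      add_mem' := fun ha hb => by simp_all [smul_add]
      neg_mem' := fun ha => by simp_all }
  have hHopen : IsOpen (H : Set G) :=
    AddSubgroup.isOpen_of_mem_nhds H (mem_interior_iff_mem_nhds.mp hx)
  have hfin : Finite (G ⧸ H) := H.quotient_finite_of_isOpen hHopen
  -- the index is positive
  have hidx : 0 < H.index := Nat.card_pos
  refine ⟨m * H.index, by positivity, fun x => ?_⟩
  have hxH : H.index • x ∈ H := H.nsmul_index_mem x
  have : m • (H.index • x) = 0 := hxH
  rwa [mul_smul]
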